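/- arXiv:2112.08398 — 2 statements merged into one kernel-verified Lean document; each statement's English description precedes it below -/
import Mathlib

section
/- Define the following elementary moves on pairs of integers: (p, q) ↦ (p, q + 2p), (p, q) ↦ (p, q − 2p), (p, q) ↦ (p + 2q, q), (p, q) ↦ (p − 2q, q), and (p, q) ↦ (−p, −q). Then for every pair of coprime integers (p, q), the reflexive-transitive closure of these moves connects (p, q) to at least one of the four pairs (1, 0), (0, 1), (1, 1), (1, −1). -/
/-- An elementary "belt-trick" move on pairs of integers. -/
def BeltMove (a b : ℤ × ℤ) : Prop :=
  b = (a.1, a.2 + 2 * a.1) ∨ b = (a.1, a.2 - 2 * a.1) ∨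
  b = (a.1 + 2 * a.2, a.2) ∨ b = (a.1 - 2 * a.2, a.2) ∨ b = (-a.1, -a.2)

lemma belt1 (p q : ℤ) : BeltMove (p, q) (p, q + 2 * p) := Or.inl rfl
lemma belt2 (p q : ℤ) : BeltMove (p, q) (p, q - 2 * p) := Or.inr (Or.inl rfl)
lemma belt3 (p q : ℤ) : BeltMove (p, q) (p + 2 * q, q) := Or.inr (Or.inr (Or.inl rfl))
lemma belt4 (p q : ℤ) : BeltMove (p, q) (p - 2 * q, q) := Or.inr (Or.inr (Or.inr (Or.inl rfl)))
lemma belt5 (p q : ℤ) : BeltMove (p, q) (-p, -q) := Or.inr (Or.inr (Or.inr (Or.inr rfl)))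

lemma gcd_add (p q : ℤ) (h : Int.gcd p q = 1) : Int.gcd p (q + 2 * p) = 1 := by
  rw [← Int.isCoprime_iff_gcd_eq_one] at h ⊢
  have := h.add_mul_right_right 2
  exact this

lemma gcd_sub (p q : ℤ) (h : Int.gcd p q = 1) : Int.gcd p (q - 2 * p) = 1 := by
  rw [← Int.isCoprime_iff_gcd_eq_one] at h ⊢
  have := h.add_mul_right_right (-2)
  rwa [show q + -2 * p = q - 2 * p by ring] at this

lemma gcd_add' (p q : ℤ) (h : Int.gcd p q = 1) : Int.gcd (p + 2 * q) q = 1 := by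
  rw [← Int.isCoprime_iff_gcd_eq_one] at h ⊢
  have := h.add_mul_left_left 2
  rwa [show p + q * 2 = p + 2 * q by ring] at this

lemma gcd_sub' (p q : ℤ) (h : Int.gcd p q = 1) : Int.gcd (p - 2 * q) q = 1 := by
  rw [← Int.isCoprime_iff_gcd_eq_one] at h ⊢
  have := h.add_mul_left_left (-2)
  rwa [show p + q * (-2) = p - 2 * q by ring] at this

abbrev Goal (p q : ℤ) : Prop :=
    Relation.ReflTransGen BeltMove (p, q) (1, 0) ∨
    Relation.ReflTransGen BeltMove (p, q) (0, 1) ∨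
    Relation.ReflTransGen BeltMove (p, q) (1, 1) ∨
    Relation.ReflTransGen BeltMove (p, q) (1, -1)

lemma goal_head {p q p' q' : ℤ} (hm : BeltMove (p, q) (p', q')) (hg : Goal p' q') :
    Goal p q := by
  rcases hg with hg | hg | hg | hg
  · exact Or.inl (hg.head hm)
  · exact Or.inr (Or.inl (hg.head hm))
  · exact Or.inr (Or.inr (Or.inl (hg.head hm)))
  · exact Or.inr (Or.inr (Or.inr (hg.head hm)))

lemma aux : ∀ n : ℕ, ∀ p q : ℤ, p.natAbs + q.natAbs ≤ n → Int.gcd p q = 1 → Goal p q := by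
  intro n
  induction n with
  | zero =>
    intro p q hn h
    have hp : p = 0 := by omega
    have hq : q = 0 := by omega
    simp [hp, hq, Int.gcd] at h
  | succ n ih =>
    intro p q hn h
    by_cases hp : p = 0
    · subst hp
      have : q.natAbs = 1 := by simpa [Int.gcd] using h
      rcases (by omega : q = 1 ∨ q = -1) with rfl | rfl
      · exact Or.inr (Or.inl .refl)
      · exact Or.inr (Or.inl ((Relation.ReflTransGen.refl).head (belt5 0 (-1))))
    by_cases hq : q = 0
    · subst hq
      have : p.natAbs = 1 := by simpa [Int.gcd] using h
      rcases (by omega : p = 1 ∨ p = -1) with rfl | rfl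
      · exact Or.inl .refl
      · exact Or.inl ((Relation.ReflTransGen.refl).head (belt5 (-1) 0))
    rcases lt_trichotomy p.natAbs q.natAbs with hlt | heq | hgt
    · -- reduce q
      have hred : (q + 2 * p).natAbs < q.natAbs ∨ (q - 2 * p).natAbs < q.natAbs := by omega
      rcases hred with hr | hr
      · exact goal_head (belt1 p q) (ih p (q + 2 * p) (by omega) (gcd_add p q h))
      · exact goal_head (belt2 p q) (ih p (q - 2 * p) (by omega) (gcd_sub p q h))
    · -- |p| = |q|, gcd forces them to be ±1
      have h1 : p.natAbs = 1 := by
        rw [Int.gcd, heq, Nat.gcd_self] at h; omega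
      have h2 : q.natAbs = 1 := by omega
      rcases (by omega : p = 1 ∨ p = -1) with rfl | rfl <;>
        rcases (by omega : q = 1 ∨ q = -1) with rfl | rfl
      · exact Or.inr (Or.inr (Or.inl .refl))
      · exact Or.inr (Or.inr (Or.inr .refl))
      · exact Or.inr (Or.inr (Or.inr ((Relation.ReflTransGen.refl).head (belt5 (-1) 1))))
      · exact Or.inr (Or.inr (Or.inl ((Relation.ReflTransGen.refl).head (belt5 (-1) (-1)))))
    · -- reduce p
      have hred : (p + 2 * q).natAbs < p.natAbs ∨ (p - 2 * q).natAbs < p.natAbs := by omega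
      rcases hred with hr | hr
      · exact goal_head (belt3 p q) (ih (p + 2 * q) q (by omega) (gcd_add' p q h))
      · exact goal_head (belt4 p q) (ih (p - 2 * q) q (by omega) (gcd_sub' p q h))

theorem stmt5 (p q : ℤ) (h : Int.gcd p q = 1) :
    Relation.ReflTransGen BeltMove (p, q) (1, 0) ∨
    Relation.ReflTransGen BeltMove (p, q) (0, 1) ∨
    Relation.ReflTransGen BeltMove (p, q) (1, 1) ∨
    Relation.ReflTransGen BeltMove (p, q) (1, -1) :=
  aux (p.natAbs + q.natAbs) p q le_rfl h
end

section
/- Let A, B, C be finite types with A, B nonempty, let α : A → C and β : B → C be maps, and let d : A → ℝ, e : B → ℝ, f : C → ℝ be strictly positive functions. Assume there exist μ₀ ∈ A, ν₀ ∈ B with α(μ₀) = β(ν₀). Call a pair (p, q) of probability vectors, p on A and q on B, feasible if they have equal pushforwards: for every k ∈ C, ∑_{μ : α(μ)=k} p(μ) = ∑_{ν : β(ν)=k} q(ν) =: r(k). For feasible (p, q) define Φ(p, q) = ∑_{μ∈A} p(μ)·( log d(μ)² − log p(μ) ) + ∑_{ν∈B} q(ν)·( log e(ν)² − log q(ν)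 ) − ∑_{k∈C} r(k)·( log f(k)² − log r(k) ), where any term with zero coefficient is 0. Then the maximum of Φ over all feasible pairs is attained and equals log( ∑_{(μ,ν) : α(μ)=β(ν)} d(μ)² · e(ν)² / f(α(μ))² ). -/
open Finset Real

private lemma gibbs {ι : Type*} (s : Finset ι) (w a : ι → ℝ)
    (hw : ∀ i ∈ s, 0 ≤ w i) (hw1 : ∑ i ∈ s, w i = 1)
    (ha : ∀ i ∈ s, 0 < a i) :
    ∑ i ∈ s, w i * (Real.log (a i) - Real.log (w i)) ≤ Real.log (∑ i ∈ s, a i) := by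
  have hsne : s.Nonempty := by
    rcases s.eq_empty_or_nonempty with h | h
    · simp [h] at hw1
    · exact h
  set S := ∑ i ∈ s, a i with hS
  have hSpos : 0 < S := Finset.sum_pos ha hsne
  have key : ∀ i ∈ s, w i * (Real.log (a i) - Real.log (w i)) - w i * Real.log S
      ≤ a i / S - w i := by
    intro i hi
    rcases eq_or_lt_of_le (hw i hi) with h0 | h0
    · rw [← h0]
      have : 0 ≤ a i / S := div_nonneg (ha i hi).le hSpos.le
      simpa using this
    · have hai := ha i hi
      have hlog : Real.log (a i) - Real.log (w i) - Real.log S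
          = Real.log (a i / (w i * S)) := by
        rw [Real.log_div (ne_of_gt hai) (ne_of_gt (by positivity)), Real.log_mul (ne_of_gt h0) (ne_of_gt hSpos)]
        ring
      have heq : w i * (Real.log (a i) - Real.log (w i)) - w i * Real.log S
          = w i * Real.log (a i / (w i * S)) := by rw [← hlog]; ring
      rw [heq]
      calc w i * Real.log (a i / (w i * S))
          ≤ w i * (a i / (w i * S) - 1) := by
            apply mul_le_mul_of_nonneg_left _ h0.le
            exact Real.log_le_sub_one_of_pos (by positivity)
        _ = a i / S - w i := by field_simp
  have hsum := Finset.sum_le_sum key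
  rw [Finset.sum_sub_distrib, ← Finset.sum_mul, hw1, one_mul,
      Finset.sum_sub_distrib, ← Finset.sum_div, hw1] at hsum
  have hss : S / S - 1 = 0 := by field_simp; norm_num
  linarith [hsum]

private lemma group_left {A B C : Type*} [Fintype A] [Fintype B] [DecidableEq C]
    (α : A → C) (β : B → C) (F : A × B → ℝ) :
    ∑ x ∈ Finset.univ.filter fun x : A × B => α x.1 = β x.2, F x
      = ∑ μ, ∑ ν ∈ Finset.univ.filter fun ν => β ν = α μ, F (μ, ν) := by
  rw [Finset.sum_filter, Fintype.sum_prod_type]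
  refine Finset.sum_congr rfl fun μ _ => ?_
  rw [Finset.sum_filter]
  exact Finset.sum_congr rfl fun ν _ => by simp only [eq_comm]

private lemma group_right {A B C : Type*} [Fintype A] [Fintype B] [DecidableEq C]
    (α : A → C) (β : B → C) (F : A × B → ℝ) :
    ∑ x ∈ Finset.univ.filter fun x : A × B => α x.1 = β x.2, F x
      = ∑ ν, ∑ μ ∈ Finset.univ.filter fun μ => α μ = β ν, F (μ, ν) := by
  rw [Finset.sum_filter, Fintype.sum_prod_type_right]
  refine Finset.sum_congr rfl fun ν _ => ?_
  rw [Finset.sum_filter]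

private lemma core {A B C : Type*} [Fintype A] [Fintype B] [Fintype C] [DecidableEq C]
    (α : A → C) (β : B → C) (d : A → ℝ) (e : B → ℝ) (f : C → ℝ)
    (hd : ∀ μ, 0 < d μ) (he : ∀ ν, 0 < e ν) (hf : ∀ k, 0 < f k)
    (p : A → ℝ) (q : B → ℝ) (hp0 : ∀ μ, 0 ≤ p μ) (hq0 : ∀ ν, 0 ≤ q ν)
    (r : C → ℝ) (hr : ∀ k, r k = ∑ μ ∈ Finset.univ.filter fun μ => α μ = k, p μ)
    (hpq : ∀ k : C, (∑ μ ∈ Finset.univ.filter fun μ => α μ = k, p μ)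
             = (∑ ν ∈ Finset.univ.filter fun ν => β ν = k, q ν))
    (m : A × B → ℝ)
    (hm : ∀ x : A × B, m x =
      if r (α x.1) = 0 then 0 else p x.1 * q x.2 / r (α x.1)) :
    (∀ x, 0 ≤ m x) ∧
    (∑ x ∈ Finset.univ.filter fun x : A × B => α x.1 = β x.2, m x = ∑ μ, p μ) ∧
    ((∑ μ, p μ * (Real.log ((d μ) ^ 2) - Real.log (p μ)))
      + (∑ ν, q ν * (Real.log ((e ν) ^ 2) - Real.log (q ν)))
      - (∑ k, r k * (Real.log ((f k) ^ 2) - Real.log (r k)))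
      = ∑ x ∈ Finset.univ.filter fun x : A × B => α x.1 = β x.2,
          m x * (Real.log ((d x.1)^2 * (e x.2)^2 / (f (α x.1))^2) - Real.log (m x))) := by
  have hr0 : ∀ k, 0 ≤ r k := fun k => by
    rw [hr]; exact Finset.sum_nonneg fun _ _ => hp0 _
  have hm0 : ∀ x, 0 ≤ m x := by
    intro x; rw [hm]
    split
    · exact le_refl 0
    · exact div_nonneg (mul_nonneg (hp0 _) (hq0 _)) (hr0 _)
  have hpr : ∀ μ, r (α μ) = 0 → p μ = 0 := by
    intro μ h
    have h1 : p μ ≤ r (α μ) := by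
      rw [hr]
      exact Finset.single_le_sum (f := p) (fun i _ => hp0 i) (by simp)
    linarith [hp0 μ]
  have hqr : ∀ ν, r (β ν) = 0 → q ν = 0 := by
    intro ν h
    have h1 : q ν ≤ r (β ν) := by
      rw [hr, hpq]
      exact Finset.single_le_sum (f := q) (fun i _ => hq0 i) (by simp)
    linarith [hq0 ν]
  have hmarg1 : ∀ μ, ∑ ν ∈ Finset.univ.filter fun ν => β ν = α μ, m (μ, ν) = p μ := by
    intro μ
    by_cases h : r (α μ) = 0
    · have hp := hpr μ h
      rw [hp]
      refine Finset.sum_eq_zero fun ν _ => ?_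
      rw [hm]; simp [h]
    · have hc : ∀ ν ∈ Finset.univ.filter fun ν => β ν = α μ,
          m (μ, ν) = (p μ / r (α μ)) * q ν := by
        intro ν _
        rw [hm]
        simp only [h, if_false]
        ring
      rw [Finset.sum_congr rfl hc, ← Finset.mul_sum, ← hpq (α μ), ← hr (α μ)]
      field_simp
  have hmarg2 : ∀ ν, ∑ μ ∈ Finset.univ.filter fun μ => α μ = β ν, m (μ, ν) = q ν := by
    intro ν
    by_cases h : r (β ν) = 0
    · have hq := hqr ν h
      rw [hq]
      refine Finset.sum_eq_zero fun μ hμ => ?_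
      have hαμ : α μ = β ν := (Finset.mem_filter.mp hμ).2
      rw [hm]
      simp [hαμ, h]
    · have hc : ∀ μ ∈ Finset.univ.filter fun μ => α μ = β ν,
          m (μ, ν) = (q ν / r (β ν)) * p μ := by
        intro μ hμ
        have hαμ : α μ = β ν := (Finset.mem_filter.mp hμ).2
        rw [hm]
        simp only [hαμ, h, if_false]
        ring
      rw [Finset.sum_congr rfl hc, ← Finset.mul_sum, ← hr (β ν)]
      field_simp
  refine ⟨hm0, ?_, ?_⟩
  · rw [group_left α β]
    exact Finset.sum_congr rfl fun μ _ => hmarg1 μ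
  have htw : ∀ x ∈ Finset.univ.filter fun x : A × B => α x.1 = β x.2,
      m x * (Real.log ((d x.1)^2 * (e x.2)^2 / (f (α x.1))^2) - Real.log (m x))
        = m x * (Real.log ((d x.1)^2) - Real.log (p x.1))
        + m x * (Real.log ((e x.2)^2) - Real.log (q x.2))
        - m x * (Real.log ((f (α x.1))^2) - Real.log (r (α x.1))) := by
    intro x hx
    by_cases hmx : m x = 0
    · simp [hmx]
    · have hrne : r (α x.1) ≠ 0 := by
        intro h; rw [hm, if_pos h] at hmx; exact hmx rfl
      have hmeq : m x = p x.1 * q x.2 / r (α x.1) := by rw [hm, if_neg hrne]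
      have hpne : p x.1 ≠ 0 := by
        intro h; rw [hmeq, h] at hmx; simp at hmx
      have hqne : q x.2 ≠ 0 := by
        intro h; rw [hmeq, h] at hmx; simp at hmx
      have hla : Real.log ((d x.1)^2 * (e x.2)^2 / (f (α x.1))^2)
          = Real.log ((d x.1)^2) + Real.log ((e x.2)^2) - Real.log ((f (α x.1))^2) := by
        rw [Real.log_div (mul_ne_zero (pow_ne_zero _ (hd x.1).ne') (pow_ne_zero _ (he x.2).ne')) (pow_ne_zero _ (hf (α x.1)).ne'), Real.log_mul (pow_ne_zero _ (hd x.1).ne') (pow_ne_zero _ (he x.2).ne')]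
      have hlm : Real.log (m x) = Real.log (p x.1) + Real.log (q x.2) - Real.log (r (α x.1)) := by
        rw [hmeq, Real.log_div (mul_ne_zero hpne hqne) hrne, Real.log_mul hpne hqne]
      rw [hla, hlm]; ring
  rw [Finset.sum_congr rfl htw, Finset.sum_sub_distrib, Finset.sum_add_distrib]
  have hS1 : ∑ x ∈ Finset.univ.filter fun x : A × B => α x.1 = β x.2,
      m x * (Real.log ((d x.1)^2) - Real.log (p x.1))
      = ∑ μ, p μ * (Real.log ((d μ)^2) - Real.log (p μ)) := by
    rw [group_left α β]
    refine Finset.sum_congr rfl fun μ _ => ?_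
    dsimp only
    rw [← Finset.sum_mul, hmarg1]
  have hS2 : ∑ x ∈ Finset.univ.filter fun x : A × B => α x.1 = β x.2,
      m x * (Real.log ((e x.2)^2) - Real.log (q x.2))
      = ∑ ν, q ν * (Real.log ((e ν)^2) - Real.log (q ν)) := by
    rw [group_right α β]
    refine Finset.sum_congr rfl fun ν _ => ?_
    dsimp only
    rw [← Finset.sum_mul, hmarg2]
  have hS3 : ∑ x ∈ Finset.univ.filter fun x : A × B => α x.1 = β x.2,
      m x * (Real.log ((f (α x.1))^2) - Real.log (r (α x.1)))
      = ∑ k, r k * (Real.log ((f k)^2) - Real.log (r k)) := by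
    rw [group_left α β]
    have h1 : ∀ μ, ∑ ν ∈ Finset.univ.filter fun ν => β ν = α μ,
        m (μ, ν) * (Real.log ((f (α μ))^2) - Real.log (r (α μ)))
        = p μ * (Real.log ((f (α μ))^2) - Real.log (r (α μ))) := by
      intro μ; rw [← Finset.sum_mul, hmarg1]
    rw [Finset.sum_congr rfl fun μ _ => h1 μ]
    rw [← Finset.sum_fiberwise (g := α)
      (f := fun μ => p μ * (Real.log ((f (α μ))^2) - Real.log (r (α μ)))) Finset.univ]
    refine Finset.sum_congr rfl fun k _ => ?_
    have h2 : ∀ μ ∈ Finset.univ.filter fun μ => α μ = k,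
        p μ * (Real.log ((f (α μ))^2) - Real.log (r (α μ)))
        = p μ * (Real.log ((f k)^2) - Real.log (r k)) := by
      intro μ hμ
      rw [(Finset.mem_filter.mp hμ).2]
    rw [Finset.sum_congr rfl h2, ← Finset.sum_mul, ← hr k]
  rw [hS1, hS2, hS3]

private lemma exists_opt {A B C : Type*} [Fintype A] [Fintype B] [Fintype C] [DecidableEq C]
    (α : A → C) (β : B → C) (d : A → ℝ) (e : B → ℝ) (f : C → ℝ)
    (hd : ∀ μ, 0 < d μ) (he : ∀ ν, 0 < e ν) (hf : ∀ k, 0 < f k)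
    (μ₀ : A) (ν₀ : B) (hμν : α μ₀ = β ν₀)
    (W V : C → ℝ)
    (hW : ∀ k, W k = ∑ μ ∈ Finset.univ.filter fun μ => α μ = k, (d μ)^2)
    (hV : ∀ k, V k = ∑ ν ∈ Finset.univ.filter fun ν => β ν = k, (e ν)^2)
    (Z : ℝ) (hZ : Z = ∑ x ∈ Finset.univ.filter fun x : A × B => α x.1 = β x.2,
          (d x.1) ^ 2 * (e x.2) ^ 2 / (f (α x.1)) ^ 2) :
    ∃ (p : A → ℝ) (q : B → ℝ),
      (∀ μ : A, 0 ≤ p μ) ∧ (∑ μ, p μ = 1) ∧ (∀ ν : B, 0 ≤ q ν) ∧ (∑ ν, q ν = 1) ∧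
      (∀ k : C, (∑ μ ∈ Finset.univ.filter fun μ => α μ = k, p μ)
             = (∑ ν ∈ Finset.univ.filter fun ν => β ν = k, q ν)) ∧
      ((∑ μ, p μ * (Real.log ((d μ) ^ 2) - Real.log (p μ)))
      + (∑ ν, q ν * (Real.log ((e ν) ^ 2) - Real.log (q ν)))
      - (∑ k, (∑ μ ∈ Finset.univ.filter fun μ => α μ = k, p μ)
              * (Real.log ((f k) ^ 2)
                  - Real.log (∑ μ ∈ Finset.univ.filter fun μ => α μ = k, p μ)))
      = Real.log Z) := by
  have hZpos : 0 < Z := by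
    rw [hZ]
    refine Finset.sum_pos (fun x _ => ?_) ⟨(μ₀, ν₀), by simp [hμν]⟩
    exact div_pos (mul_pos (pow_pos (hd _) 2) (pow_pos (he _) 2)) (pow_pos (hf _) 2)
  have hW0 : ∀ k, 0 ≤ W k := fun k => by
    rw [hW]; exact Finset.sum_nonneg fun _ _ => sq_nonneg _
  have hV0 : ∀ k, 0 ≤ V k := fun k => by
    rw [hV]; exact Finset.sum_nonneg fun _ _ => sq_nonneg _
  have hZ' : Z = ∑ k, W k * V k / (f k)^2 := by
    rw [hZ, group_left α β]
    have h1 : ∀ μ : A, ∑ ν ∈ Finset.univ.filter fun ν => β ν = α μ,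
        (d μ)^2 * (e ν)^2 / (f (α μ))^2
        = V (α μ) * ((d μ)^2 / (f (α μ))^2) := by
      intro μ
      have h2 : ∀ ν ∈ Finset.univ.filter fun ν => β ν = α μ,
          (d μ)^2 * (e ν)^2 / (f (α μ))^2 = (e ν)^2 * ((d μ)^2 / (f (α μ))^2) :=
        fun ν _ => by ring
      rw [Finset.sum_congr rfl h2, ← Finset.sum_mul, ← hV]
    have h1' : ∀ μ ∈ (Finset.univ : Finset A),
        (∑ ν ∈ Finset.univ.filter fun ν => β ν = α μ,
          (d (μ, ν).1)^2 * (e (μ, ν).2)^2 / (f (α (μ, ν).1))^2)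
        = V (α μ) * ((d μ)^2 / (f (α μ))^2) := fun μ _ => h1 μ
    rw [Finset.sum_congr rfl h1']
    rw [← Finset.sum_fiberwise (g := α)
      (f := fun μ => V (α μ) * ((d μ)^2 / (f (α μ))^2)) Finset.univ]
    refine Finset.sum_congr rfl fun k _ => ?_
    have h3 : ∀ μ ∈ Finset.univ.filter fun μ => α μ = k,
        V (α μ) * ((d μ)^2 / (f (α μ))^2) = (d μ)^2 * (V k / (f k)^2) := by
      intro μ hμ
      rw [(Finset.mem_filter.mp hμ).2]; ring
    rw [Finset.sum_congr rfl h3, ← Finset.sum_mul, ← hW]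
    ring
  set p : A → ℝ := fun μ => (d μ)^2 * (V (α μ) / ((f (α μ))^2 * Z)) with hpdef
  set q : B → ℝ := fun ν => (e ν)^2 * (W (β ν) / ((f (β ν))^2 * Z)) with hqdef
  have hp0 : ∀ μ, 0 ≤ p μ := fun μ =>
    mul_nonneg (sq_nonneg _) (div_nonneg (hV0 _) (mul_nonneg (sq_nonneg _) hZpos.le))
  have hq0 : ∀ ν, 0 ≤ q ν := fun ν =>
    mul_nonneg (sq_nonneg _) (div_nonneg (hW0 _) (mul_nonneg (sq_nonneg _) hZpos.le))
  have hfibp : ∀ k, (∑ μ ∈ Finset.univ.filter fun μ => α μ = k, p μ)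
      = W k * (V k / ((f k)^2 * Z)) := by
    intro k
    have h1 : ∀ μ ∈ Finset.univ.filter fun μ => α μ = k,
        p μ = (d μ)^2 * (V k / ((f k)^2 * Z)) := by
      intro μ hμ
      simp only [hpdef, (Finset.mem_filter.mp hμ).2]
    rw [Finset.sum_congr rfl h1, ← Finset.sum_mul, ← hW k]
  have hfibq : ∀ k, (∑ ν ∈ Finset.univ.filter fun ν => β ν = k, q ν)
      = V k * (W k / ((f k)^2 * Z)) := by
    intro k
    have h1 : ∀ ν ∈ Finset.univ.filter fun ν => β ν = k,
        q ν = (e ν)^2 * (W k / ((f k)^2 * Z)) := by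
      intro ν hν
      simp only [hqdef, (Finset.mem_filter.mp hν).2]
    rw [Finset.sum_congr rfl h1, ← Finset.sum_mul, ← hV k]
  have hfib : ∀ k : C, (∑ μ ∈ Finset.univ.filter fun μ => α μ = k, p μ)
             = (∑ ν ∈ Finset.univ.filter fun ν => β ν = k, q ν) := by
    intro k; rw [hfibp, hfibq]; ring
  have hp1 : ∑ μ, p μ = 1 := by
    rw [← Finset.sum_fiberwise (g := α) (f := p) Finset.univ]
    have h2 : ∀ k ∈ (Finset.univ : Finset C),
        (∑ μ ∈ Finset.univ.filter fun μ => α μ = k, p μ)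
        = (W k * V k / (f k)^2) / Z := by
      intro k _
      rw [hfibp k]
      have hfk := (hf k).ne'
      field_simp
    rw [Finset.sum_congr rfl h2, ← Finset.sum_div, ← hZ', div_self hZpos.ne']
  have hq1 : ∑ ν, q ν = 1 := by
    rw [← Finset.sum_fiberwise (g := β) (f := q) Finset.univ]
    have h2 : ∀ k ∈ (Finset.univ : Finset C),
        (∑ ν ∈ Finset.univ.filter fun ν => β ν = k, q ν)
        = (W k * V k / (f k)^2) / Z := by
      intro k _
      rw [hfibq k]
      have hfk := (hf k).ne'
      field_simp
    rw [Finset.sum_congr rfl h2, ← Finset.sum_div, ← hZ', div_self hZpos.ne']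
  refine ⟨p, q, hp0, hp1, hq0, hq1, hfib, ?_⟩
  set r : C → ℝ := fun k => ∑ μ ∈ Finset.univ.filter fun μ => α μ = k, p μ with hrdef
  set m : A × B → ℝ := fun x =>
    if r (α x.1) = 0 then 0 else p x.1 * q x.2 / r (α x.1) with hmdef
  obtain ⟨-, -, hkey⟩ := core α β d e f hd he hf p q hp0 hq0
    r (fun k => by rw [hrdef]) hfib m (fun x => by rw [hmdef])
  refine Eq.trans hkey ?_
  have hmeq : ∀ x ∈ Finset.univ.filter fun x : A × B => α x.1 = β x.2,
      m x = ((d x.1)^2 * (e x.2)^2 / (f (α x.1))^2) / Z := by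
    intro x hx
    have hαβ : α x.1 = β x.2 := (Finset.mem_filter.mp hx).2
    have hWx : 0 < W (α x.1) := by
      rw [hW]
      refine lt_of_lt_of_le (pow_pos (hd x.1) 2)
        (Finset.single_le_sum (f := fun μ => (d μ)^2) (fun i _ => sq_nonneg _) ?_)
      simp
    have hVx : 0 < V (α x.1) := by
      rw [hV]
      refine lt_of_lt_of_le (pow_pos (he x.2) 2)
        (Finset.single_le_sum (f := fun ν => (e ν)^2) (fun i _ => sq_nonneg _) ?_)
      simp [hαβ]
    have hrx : r (α x.1) = W (α x.1) * (V (α x.1) / ((f (α x.1))^2 * Z)) := hfibp _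
    have hrne : r (α x.1) ≠ 0 := by
      rw [hrx]
      have hfx := hf (α x.1)
      positivity
    have h1 : m x = p x.1 * q x.2 / r (α x.1) := by
      rw [hmdef]; simp only [hrne, if_false]
    rw [h1, hrx, hpdef, hqdef]
    simp only
    rw [← hαβ]
    have h2 := (hf (α x.1)).ne'
    have h3 := hZpos.ne'
    have h4 := hWx.ne'
    have h5 := hVx.ne'
    field_simp
  have hterm : ∀ x ∈ Finset.univ.filter fun x : A × B => α x.1 = β x.2,
      m x * (Real.log ((d x.1)^2 * (e x.2)^2 / (f (α x.1))^2) - Real.log (m x))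
      = ((d x.1)^2 * (e x.2)^2 / (f (α x.1))^2) / Z * Real.log Z := by
    intro x hx
    have hax : 0 < (d x.1)^2 * (e x.2)^2 / (f (α x.1))^2 :=
      div_pos (mul_pos (pow_pos (hd _) 2) (pow_pos (he _) 2)) (pow_pos (hf _) 2)
    rw [hmeq x hx, Real.log_div hax.ne' hZpos.ne']
    ring
  rw [Finset.sum_congr rfl hterm, ← Finset.sum_mul, ← Finset.sum_div, ← hZ,
    div_self hZpos.ne', one_mul]


theorem stmt6 {A B C : Type*} [Fintype A] [Fintype B] [Fintype C]
    [Nonempty A] [Nonempty B] [DecidableEq C]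
    (α : A → C) (β : B → C) (d : A → ℝ) (e : B → ℝ) (f : C → ℝ)
    (hd : ∀ μ, 0 < d μ) (he : ∀ ν, 0 < e ν) (hf : ∀ k, 0 < f k)
    (hmatch : ∃ (μ₀ : A) (ν₀ : B), α μ₀ = β ν₀)
    (Feasible : (A → ℝ) → (B → ℝ) → Prop)
    (hFeasible : ∀ p q, Feasible p q ↔
      (∀ μ, 0 ≤ p μ) ∧ (∑ μ, p μ = 1) ∧ (∀ ν, 0 ≤ q ν) ∧ (∑ ν, q ν = 1) ∧
      ∀ k : C, (∑ μ ∈ Finset.univ.filter fun μ => α μ = k, p μ)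
             = (∑ ν ∈ Finset.univ.filter fun ν => β ν = k, q ν))
    (Φ : (A → ℝ) → (B → ℝ) → ℝ)
    (hΦ : ∀ p q, Φ p q =
      (∑ μ, p μ * (Real.log ((d μ) ^ 2) - Real.log (p μ)))
      + (∑ ν, q ν * (Real.log ((e ν) ^ 2) - Real.log (q ν)))
      - (∑ k, (∑ μ ∈ Finset.univ.filter fun μ => α μ = k, p μ)
              * (Real.log ((f k) ^ 2)
                  - Real.log (∑ μ ∈ Finset.univ.filter fun μ => α μ = k, p μ)))) :
    (∃ p q, Feasible p q ∧ Φ p q =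
        Real.log (∑ x ∈ Finset.univ.filter fun x : A × B => α x.1 = β x.2,
          (d x.1) ^ 2 * (e x.2) ^ 2 / (f (α x.1)) ^ 2)) ∧
    (∀ p q, Feasible p q → Φ p q ≤
        Real.log (∑ x ∈ Finset.univ.filter fun x : A × B => α x.1 = β x.2,
          (d x.1) ^ 2 * (e x.2) ^ 2 / (f (α x.1)) ^ 2)) := by
  obtain ⟨μ₀, ν₀, hμν⟩ := hmatch
  constructor
  · obtain ⟨p, q, hp0, hp1, hq0, hq1, hfib, hval⟩ :=
      exists_opt α β d e f hd he hf μ₀ ν₀ hμν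
        (fun k => ∑ μ ∈ Finset.univ.filter fun μ => α μ = k, (d μ)^2)
        (fun k => ∑ ν ∈ Finset.univ.filter fun ν => β ν = k, (e ν)^2)
        (fun _ => rfl) (fun _ => rfl)
        (∑ x ∈ Finset.univ.filter fun x : A × B => α x.1 = β x.2,
          (d x.1) ^ 2 * (e x.2) ^ 2 / (f (α x.1)) ^ 2) rfl
    exact ⟨p, q, (hFeasible p q).mpr ⟨hp0, hp1, hq0, hq1, hfib⟩, by rw [hΦ]; exact hval⟩
  · intro p q hfeas
    rw [hFeasible] at hfeas
    obtain ⟨hp0, hp1, hq0, hq1, hfib⟩ := hfeas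
    obtain ⟨hm0, hmass, hkey⟩ := core α β d e f hd he hf p q hp0 hq0
      (fun k => ∑ μ ∈ Finset.univ.filter fun μ => α μ = k, p μ) (fun _ => rfl) hfib
      (fun x => if (∑ μ ∈ Finset.univ.filter fun μ => α μ = α x.1, p μ) = 0 then 0
        else p x.1 * q x.2 / (∑ μ ∈ Finset.univ.filter fun μ => α μ = α x.1, p μ))
      (fun _ => rfl)
    rw [hΦ]
    refine le_trans (le_of_eq ?_)
      (gibbs (Finset.univ.filter fun x : A × B => α x.1 = β x.2)
        (fun x => if (∑ μ ∈ Finset.univ.filter fun μ => α μ = α x.1, p μ) = 0 then 0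
          else p x.1 * q x.2 / (∑ μ ∈ Finset.univ.filter fun μ => α μ = α x.1, p μ))
        (fun x => (d x.1) ^ 2 * (e x.2) ^ 2 / (f (α x.1)) ^ 2)
        (fun x _ => hm0 x) (hmass.trans hp1)
        (fun x _ => div_pos (mul_pos (pow_pos (hd _) 2) (pow_pos (he _) 2))
          (pow_pos (hf _) 2)))
    exact hkey
end
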